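/- Let A, B be lower triangular n×n matrices over ℝ (or ℂ), each with constant diagonal, such that e^A e^B = e^B e^A. Then AB = BA. -/

import Mathlib

open NormedSpace

/-- `A` is lower triangular with all diagonal entries equal (the set `𝕋_n(K)`). -/
def LowerTriConstDiag {K : Type*} [Semiring K] {n : ℕ}
    (A : Matrix (Fin n) (Fin n) K) : Prop :=
  (∀ i j : Fin n, i < j → A i j = 0) ∧ ∀ i j : Fin n, A i i = A j j

open scoped Nat

namespace CommExpAux

variable {𝕂 : Type*} [RCLike 𝕂] {n : ℕ}

/-- `X` vanishes on all subdiagonals of index `< d` (entries with `i < j + d`). -/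
def Fd (d : ℕ) (X : Matrix (Fin n) (Fin n) 𝕂) : Prop :=
  ∀ i j : Fin n, (i : ℕ) < (j : ℕ) + d → X i j = 0

theorem Fd_mono {d e : ℕ} (hde : d ≤ e) {X : Matrix (Fin n) (Fin n) 𝕂}
    (hX : Fd e X) : Fd d X := fun i j hij => hX i j (by omega)

theorem Fd_mul {a b : ℕ} {X Y : Matrix (Fin n) (Fin n) 𝕂}
    (hX : Fd a X) (hY : Fd b Y) : Fd (a + b) (X * Y) := by
  intro i j hij
  rw [Matrix.mul_apply]
  refine Finset.sum_eq_zero fun l _ => ?_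
  by_cases h1 : (i : ℕ) < (l : ℕ) + a
  · rw [hX i l h1, zero_mul]
  · rw [hY l j (by omega), mul_zero]

theorem Fd_one : Fd 0 (1 : Matrix (Fin n) (Fin n) 𝕂) := by
  intro i j hij
  exact Matrix.one_apply_ne (by intro h; subst h; omega)

theorem Fd_pow {X : Matrix (Fin n) (Fin n) 𝕂} (hX : Fd 1 X) :
    ∀ k, Fd k (X ^ k) := by
  intro k
  induction k with
  | zero => simpa using Fd_one
  | succ k ih => rw [pow_succ]; exact Fd_mul ih hX

theorem Fd_zero {d : ℕ} : Fd d (0 : Matrix (Fin n) (Fin n) 𝕂) := fun _ _ _ => rfl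

theorem Fd_add {d : ℕ} {X Y : Matrix (Fin n) (Fin n) 𝕂}
    (hX : Fd d X) (hY : Fd d Y) : Fd d (X + Y) := by
  intro i j hij
  simp [Matrix.add_apply, hX i j hij, hY i j hij]

theorem Fd_neg {d : ℕ} {X : Matrix (Fin n) (Fin n) 𝕂}
    (hX : Fd d X) : Fd d (-X) := by
  intro i j hij
  simp [Matrix.neg_apply, hX i j hij]

theorem Fd_sub {d : ℕ} {X Y : Matrix (Fin n) (Fin n) 𝕂}
    (hX : Fd d X) (hY : Fd d Y) : Fd d (X - Y) := by
  intro i j hij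
  simp [Matrix.sub_apply, hX i j hij, hY i j hij]

theorem Fd_smul {d : ℕ} (c : 𝕂) {X : Matrix (Fin n) (Fin n) 𝕂}
    (hX : Fd d X) : Fd d (c • X) := by
  intro i j hij
  simp [Matrix.smul_apply, hX i j hij]

theorem Fd_sum {d : ℕ} {ι : Type*} {s : Finset ι} {f : ι → Matrix (Fin n) (Fin n) 𝕂}
    (hf : ∀ x ∈ s, Fd d (f x)) : Fd d (∑ x ∈ s, f x) := by
  intro i j hij
  rw [Matrix.sum_apply]
  exact Finset.sum_eq_zero fun x hx => hf x hx i j hij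

theorem comm_pow_right {d : ℕ} {N M : Matrix (Fin n) (Fin n) 𝕂}
    (hM : Fd 1 M) (hd : Fd d (N * M - M * N)) :
    ∀ q, Fd (d + q) (N * M ^ (q + 1) - M ^ (q + 1) * N) := by
  intro q
  induction q with
  | zero => simpa using hd
  | succ q ih =>
    have key : N * M ^ (q + 2) - M ^ (q + 2) * N
        = (N * M ^ (q + 1) - M ^ (q + 1) * N) * M + M ^ (q + 1) * (N * M - M * N) := by
      noncomm_ring
    rw [key]
    have h1 : Fd (d + q + 1) ((N * M ^ (q + 1) - M ^ (q + 1) * N) * M) := Fd_mul ih hM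
    have h2 : Fd ((q + 1) + d) (M ^ (q + 1) * (N * M - M * N)) :=
      Fd_mul (Fd_pow hM (q + 1)) hd
    exact Fd_add (Fd_mono (by omega) h1) (Fd_mono (by omega) h2)

theorem comm_pow_pow {d : ℕ} {N M : Matrix (Fin n) (Fin n) 𝕂}
    (hN : Fd 1 N) (hM : Fd 1 M) (hd : Fd d (N * M - M * N)) :
    ∀ p q, Fd (d + p + q) (N ^ (p + 1) * M ^ (q + 1) - M ^ (q + 1) * N ^ (p + 1)) := by
  intro p
  induction p with
  | zero =>
    intro q
    have := comm_pow_right hM hd q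
    simpa using this
  | succ p ih =>
    intro q
    have key : N ^ (p + 2) * M ^ (q + 1) - M ^ (q + 1) * N ^ (p + 2)
        = N * (N ^ (p + 1) * M ^ (q + 1) - M ^ (q + 1) * N ^ (p + 1))
          + (N * M ^ (q + 1) - M ^ (q + 1) * N) * N ^ (p + 1) := by
      have h2 : N ^ (p + 2) = N * N ^ (p + 1) := by rw [← pow_succ']
      rw [h2]; noncomm_ring
    rw [key]
    have h1 : Fd (1 + (d + p + q)) (N * (N ^ (p + 1) * M ^ (q + 1) - M ^ (q + 1) * N ^ (p + 1))) :=
      Fd_mul hN (ih q)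
    have h3 : Fd ((d + q) + (p + 1)) ((N * M ^ (q + 1) - M ^ (q + 1) * N) * N ^ (p + 1)) :=
      Fd_mul (comm_pow_right hM hd q) (Fd_pow hN (p + 1))
    exact Fd_add (Fd_mono (by omega) h1) (Fd_mono (by omega) h3)

theorem pow_eq_zero_of_Fd_one {X : Matrix (Fin n) (Fin n) 𝕂} (hX : Fd 1 X) :
    X ^ n = 0 := by
  ext i j
  have := Fd_pow hX n i j (by omega)
  simpa using this

theorem exp_nilp {X : Matrix (Fin n) (Fin n) 𝕂} (hX : Fd 1 X) :
    exp X = ∑ k ∈ Finset.range n, (k ! : 𝕂)⁻¹ • X ^ k := by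
  rw [exp_eq_tsum 𝕂]
  refine tsum_eq_sum ?_
  intro k hk
  have hk' : n ≤ k := by simpa using hk
  have hXk : X ^ k = 0 := by
    have h1 : X ^ k = X ^ n * X ^ (k - n) := by rw [← pow_add]; congr 1; omega
    rw [h1, pow_eq_zero_of_Fd_one hX, zero_mul]
  rw [hXk, smul_zero]


theorem key_sum {N M : Matrix (Fin n) (Fin n) 𝕂} (hN : Fd 1 N) (hM : Fd 1 M)
    (h : exp N * exp M = exp M * exp N) :
    ∑ p ∈ Finset.range n, ∑ q ∈ Finset.range n,
      ((p ! : 𝕂)⁻¹ * (q ! : 𝕂)⁻¹) • (N ^ p * M ^ q - M ^ q * N ^ p) = 0 := by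
  have expand : ∀ p q : ℕ,
      ((p ! : 𝕂)⁻¹ * (q ! : 𝕂)⁻¹) • (N ^ p * M ^ q - M ^ q * N ^ p)
        = ((p ! : 𝕂)⁻¹ • N ^ p) * ((q ! : 𝕂)⁻¹ • M ^ q)
          - ((q ! : 𝕂)⁻¹ • M ^ q) * ((p ! : 𝕂)⁻¹ • N ^ p) := by
    intro p q
    rw [smul_sub, smul_mul_smul_comm, smul_mul_smul_comm, mul_comm ((q ! : 𝕂)⁻¹)]
  calc ∑ p ∈ Finset.range n, ∑ q ∈ Finset.range n,
      ((p ! : 𝕂)⁻¹ * (q ! : 𝕂)⁻¹) • (N ^ p * M ^ q - M ^ q * N ^ p)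
      = ∑ p ∈ Finset.range n, ∑ q ∈ Finset.range n,
          (((p ! : 𝕂)⁻¹ • N ^ p) * ((q ! : 𝕂)⁻¹ • M ^ q)
            - ((q ! : 𝕂)⁻¹ • M ^ q) * ((p ! : 𝕂)⁻¹ • N ^ p)) := by
        simp_rw [expand]
    _ = (∑ p ∈ Finset.range n, ∑ q ∈ Finset.range n,
          ((p ! : 𝕂)⁻¹ • N ^ p) * ((q ! : 𝕂)⁻¹ • M ^ q))
        - ∑ p ∈ Finset.range n, ∑ q ∈ Finset.range n,
          ((q ! : 𝕂)⁻¹ • M ^ q) * ((p ! : 𝕂)⁻¹ • N ^ p) := by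
        simp_rw [Finset.sum_sub_distrib]
    _ = exp N * exp M - exp M * exp N := by
        rw [Finset.sum_comm (f := fun p q => ((q ! : 𝕂)⁻¹ • M ^ q) * ((p ! : 𝕂)⁻¹ • N ^ p))]
        rw [← Finset.sum_mul_sum, ← Finset.sum_mul_sum, ← exp_nilp hN, ← exp_nilp hM]
    _ = 0 := by rw [sub_eq_zero]; exact h

theorem comm_Fd {N M : Matrix (Fin n) (Fin n) 𝕂} (hn : 2 ≤ n)
    (hN : Fd 1 N) (hM : Fd 1 M)
    (h : exp N * exp M = exp M * exp N) :
    ∀ d, Fd (d + 2) (N * M - M * N) := by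
  have key := key_sum hN hM h
  have key' : ∑ x ∈ Finset.range n ×ˢ Finset.range n,
      ((x.1 ! : 𝕂)⁻¹ * (x.2 ! : 𝕂)⁻¹) • (N ^ x.1 * M ^ x.2 - M ^ x.2 * N ^ x.1) = 0 := by
    rw [Finset.sum_product]; exact key
  have h11 : ((1, 1) : ℕ × ℕ) ∈ Finset.range n ×ˢ Finset.range n := by
    simp [Finset.mem_product, Finset.mem_range]; omega
  have hsplit := Finset.add_sum_erase _ (fun x : ℕ × ℕ =>
    ((x.1 ! : 𝕂)⁻¹ * (x.2 ! : 𝕂)⁻¹) • (N ^ x.1 * M ^ x.2 - M ^ x.2 * N ^ x.1)) h11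
  rw [key'] at hsplit
  have hF11 : ((((1:ℕ) !) : 𝕂)⁻¹ * (((1:ℕ) !) : 𝕂)⁻¹) • (N ^ 1 * M ^ 1 - M ^ 1 * N ^ 1)
      = N * M - M * N := by
    simp [Nat.factorial_one]
  have hmain : N * M - M * N
      = -∑ x ∈ (Finset.range n ×ˢ Finset.range n).erase (1, 1),
          ((x.1 ! : 𝕂)⁻¹ * (x.2 ! : 𝕂)⁻¹) • (N ^ x.1 * M ^ x.2 - M ^ x.2 * N ^ x.1) := by
    rw [← hF11]
    exact eq_neg_of_add_eq_zero_left hsplit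
  intro d
  induction d with
  | zero =>
    have h2 : Fd (1 + 1) (N * M - M * N) := Fd_sub (Fd_mul hN hM) (Fd_mul hM hN)
    exact Fd_mono (by omega) h2
  | succ d ih =>
    rw [hmain]
    refine Fd_neg (Fd_sum fun x hx => ?_)
    obtain ⟨p, q⟩ := x
    have hx1 : (p, q) ≠ ((1, 1) : ℕ × ℕ) := (Finset.mem_erase.mp hx).1
    refine Fd_smul _ ?_
    match p, q, hx1 with
    | 0, q, _ => simpa using Fd_zero
    | p + 1, 0, _ => simpa using Fd_zero
    | p + 1, q + 1, hx1 =>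
      have hpq : 1 ≤ p + q := by
        by_contra hc
        have hp : p = 0 := by omega
        have hq : q = 0 := by omega
        subst hp; subst hq
        exact hx1 rfl
      exact Fd_mono (by omega) (comm_pow_pow hN hM ih p q)

theorem comm_of_exp_comm_nilp {N M : Matrix (Fin n) (Fin n) 𝕂} (hn : 2 ≤ n)
    (hN : Fd 1 N) (hM : Fd 1 M)
    (h : exp N * exp M = exp M * exp N) :
    N * M = M * N := by
  have := comm_Fd hn hN hM h (n - 2)
  rw [← sub_eq_zero]
  ext i j
  have := this i j (by omega)
  simpa using this

end CommExpAux

open CommExpAux in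
theorem commute_of_exp_commute'
    {𝕂 : Type*} [RCLike 𝕂] (n : ℕ) (A B : Matrix (Fin n) (Fin n) 𝕂)
    (hA : (∀ i j : Fin n, i < j → A i j = 0) ∧ ∀ i j : Fin n, A i i = A j j)
    (hB : (∀ i j : Fin n, i < j → B i j = 0) ∧ ∀ i j : Fin n, B i i = B j j)
    (h : exp A * exp B = exp B * exp A) :
    A * B = B * A := by
  rcases Nat.lt_or_ge n 2 with hn | hn
  · interval_cases n
    · ext i j; exact i.elim0
    · ext i j
      rw [Matrix.mul_apply, Matrix.mul_apply, Fin.sum_univ_one, Fin.sum_univ_one]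
      have hi : i = 0 := Subsingleton.elim _ _
      have hj : j = 0 := Subsingleton.elim _ _
      subst hi; subst hj
      exact mul_comm _ _
  · set i0 : Fin n := ⟨0, by omega⟩ with hi0
    set a := A i0 i0 with ha
    set b := B i0 i0 with hb
    set N := A - a • (1 : Matrix (Fin n) (Fin n) 𝕂) with hNdef
    set M := B - b • (1 : Matrix (Fin n) (Fin n) 𝕂) with hMdef
    have lowtri : ∀ (C : Matrix (Fin n) (Fin n) 𝕂),
        (∀ i j : Fin n, i < j → C i j = 0) → (∀ i j : Fin n, C i i = C j j) →
        Fd 1 (C - C i0 i0 • (1 : Matrix (Fin n) (Fin n) 𝕂)) := by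
      intro C hC1 hC2 i j hij
      by_cases hij' : i = j
      · subst hij'
        simp [Matrix.sub_apply, Matrix.smul_apply, Matrix.one_apply_eq, hC2 i i0]
      · have hlt : i < j := by
          have hne : (i : ℕ) ≠ (j : ℕ) := fun hc => hij' (Fin.ext hc)
          exact Fin.lt_def.mpr (by omega)
        simp [Matrix.sub_apply, Matrix.smul_apply, hC1 i j hlt, Matrix.one_apply_ne hij']
    have hN : Fd 1 N := lowtri A hA.1 hA.2
    have hM : Fd 1 M := lowtri B hB.1 hB.2
    have hscal : ∀ c : 𝕂, exp (c • (1 : Matrix (Fin n) (Fin n) 𝕂)) = exp c • 1 := by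
      intro c
      have h1 : ∀ k : ℕ, (k !⁻¹ : 𝕂) • (c • (1 : Matrix (Fin n) (Fin n) 𝕂)) ^ k
          = ((k !⁻¹ : 𝕂) • c ^ k) • (1 : Matrix (Fin n) (Fin n) 𝕂) := by
        intro k
        rw [smul_pow, one_pow, smul_smul, smul_eq_mul]
      rw [exp_eq_tsum 𝕂, exp_eq_tsum 𝕂]
      simp_rw [h1]
      rw [Summable.tsum_smul_const (expSeries_summable' (𝕂 := 𝕂) c)]
    have hAeq : a • (1 : Matrix (Fin n) (Fin n) 𝕂) + N = A := by rw [hNdef]; abel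
    have hBeq : b • (1 : Matrix (Fin n) (Fin n) 𝕂) + M = B := by rw [hMdef]; abel
    have hcommA : Commute (a • (1 : Matrix (Fin n) (Fin n) 𝕂)) N := by
      unfold Commute SemiconjBy
      rw [smul_mul_assoc, one_mul, mul_smul_comm, mul_one]
    have hcommB : Commute (b • (1 : Matrix (Fin n) (Fin n) 𝕂)) M := by
      unfold Commute SemiconjBy
      rw [smul_mul_assoc, one_mul, mul_smul_comm, mul_one]
    have hexpA : exp A = exp a • exp N := by
      rw [← hAeq, Matrix.exp_add_of_commute _ _ hcommA, hscal a, smul_mul_assoc, one_mul]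
    have hexpB : exp B = exp b • exp M := by
      rw [← hBeq, Matrix.exp_add_of_commute _ _ hcommB, hscal b, smul_mul_assoc, one_mul]
    have hea : exp a ≠ 0 := (isUnit_exp a).ne_zero
    have heb : exp b ≠ 0 := (isUnit_exp b).ne_zero
    have hne : exp a * exp b ≠ 0 := mul_ne_zero hea heb
    have hNM : exp N * exp M = exp M * exp N := by
      have h' := h
      rw [hexpA, hexpB, smul_mul_smul_comm, smul_mul_smul_comm,
        mul_comm (exp b) (exp a)] at h'
      have h'' := congrArg ((exp a * exp b)⁻¹ • ·) h'
      simpa [smul_smul, mul_assoc, inv_mul_cancel_left₀ hea, inv_mul_cancel₀ heb] using h''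
    have hNMcomm : N * M = M * N := comm_of_exp_comm_nilp hn hN hM hNM
    have hfin : A * B - B * A = N * M - M * N := by
      rw [hNdef, hMdef]
      simp only [sub_mul, mul_sub, smul_sub, smul_mul_assoc, mul_smul_comm, one_mul, mul_one,
        smul_smul]
      rw [mul_comm b a]
      abel
    have hz : A * B - B * A = 0 := by rw [hfin, hNMcomm, sub_self]
    exact sub_eq_zero.mp hz


/-- Lemma 10.1(ii) / Proposition 3.3: if `A, B ∈ 𝕋_n(𝕂)` (𝕂 = ℝ or ℂ) satisfy
`e^A e^B = e^B e^A` then `AB = BA`. -/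
theorem commute_of_exp_commute
    {𝕂 : Type*} [RCLike 𝕂] (n : ℕ) (A B : Matrix (Fin n) (Fin n) 𝕂)
    (hA : LowerTriConstDiag A) (hB : LowerTriConstDiag B)
    (h : exp A * exp B = exp B * exp A) :
    A * B = B * A := by
  exact commute_of_exp_commute' n A B ⟨hA.1, hA.2⟩ ⟨hB.1, hB.2⟩ h
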